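/- Let x and y be left I-states of size k that are not too far, with generating intervals [j_i+1, j_i+l_i] for 1 ≤ i ≤ n−k, and set d = Σ_{i=1}^{k} |x_i − y_i|. Then the following identity holds in ℤ[q]: Σ_z Σ_{σ ∈ S_k} q^{d + 2·inv(σ) + 2·Σ_{i=1}^{n−k}(h_i^z − j_i)} = q^d · (k)!_{q²} · Π_{i=1}^{n−k} (l_i)_{q²}, where the outer sum runs over left I-states z of size k satisfying j_i ≤ h_i^z < j_i + l_i for all 1 ≤ i ≤ n−k, and inv(σ) denotes the number of inversions of the permutation σ ∈ S_k. (The left-hand side is the graded rank of the free abelian group Z_{μ,λ} spanned by enhanced oriented fork diagrams for the sequences μ, λ corresponding to x, y.) -/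

import Mathlib

/-- The `i`-th smallest element (0-indexed) of a finite set of natural numbers. -/
def nthElt (s : Finset ℕ) (i : ℕ) : ℕ := (s.sort (· ≤ ·)).getD i 0

/-- The hole set of an I-state: the complement `{0, …, n} \ s`. -/
def holes (n : ℕ) (s : Finset ℕ) : Finset ℕ := Finset.range (n + 1) \ s

/-- The `i`-th hole (0-indexed): `hnth n s i` is `h_{i+1}^s` in 1-indexed notation. -/
def hnth (n : ℕ) (s : Finset ℕ) (i : ℕ) : ℕ := nthElt (holes n s) i

/-- Two I-states of size `k` are too far if `|x_i − y_i| > 1` for some `i`. -/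
def TooFar (k : ℕ) (x y : Finset ℕ) : Prop :=
  ∃ i < k, 1 < ((nthElt x i : ℤ) - (nthElt y i : ℤ)).natAbs

/-- The condition `max(h_i^x, h_i^y) ≤ h_i^z < min(h_{i+1}^x, h_{i+1}^y)` for all
`1 ≤ i ≤ n − k` (0-indexed). -/
def OrientedZ (n k : ℕ) (x y z : Finset ℕ) : Prop :=
  ∀ i < n - k, max (hnth n x i) (hnth n y i) ≤ hnth n z i ∧
    hnth n z i < min (hnth n x (i + 1)) (hnth n y (i + 1))

instance (n k : ℕ) (x y z : Finset ℕ) : Decidable (OrientedZ n k x y z) := by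
  unfold OrientedZ; infer_instance

/-- The nonsymmetric quantum integer `(m)_{q²} = 1 + q² + ⋯ + q^{2(m−1)}` in `ℤ[q]`. -/
noncomputable def qInt (m : ℕ) : Polynomial ℤ :=
  ∑ j ∈ Finset.range m, Polynomial.X ^ (2 * j)

/-- The nonsymmetric quantum factorial `(k)!_{q²} = (k)_{q²} (k−1)_{q²} ⋯ (1)_{q²}`. -/
noncomputable def qFact (k : ℕ) : Polynomial ℤ :=
  ∏ j ∈ Finset.range k, qInt (j + 1)

/-- The number of inversions of a permutation `σ ∈ S_k`. -/
def invCount {k : ℕ} (σ : Equiv.Perm (Fin k)) : ℕ :=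
  (Finset.univ.filter (fun p : Fin k × Fin k => p.1 < p.2 ∧ σ p.2 < σ p.1)).card


open Polynomial

lemma nthElt_lt_nthElt {s : Finset ℕ} {i j : ℕ} (hij : i < j) (hj : j < s.card) :
    nthElt s i < nthElt s j := by
  have hl : (s.sort (· ≤ ·)).length = s.card := Finset.length_sort _
  have hj' : j < (s.sort (· ≤ ·)).length := by omega
  have hi' : i < (s.sort (· ≤ ·)).length := by omega
  have := (Finset.sortedLT_sort s).pairwise
  rw [List.pairwise_iff_get] at this
  have h2 := this ⟨i, hi'⟩ ⟨j, hj'⟩ hij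
  rw [nthElt, nthElt, List.getD_eq_getElem?_getD, List.getD_eq_getElem?_getD,
    List.getElem?_eq_getElem hi', List.getElem?_eq_getElem hj']
  simpa [List.get_eq_getElem] using h2

lemma nthElt_mem {s : Finset ℕ} {i : ℕ} (hi : i < s.card) : nthElt s i ∈ s := by
  have hi' : i < (s.sort (· ≤ ·)).length := by rw [Finset.length_sort]; exact hi
  have : nthElt s i ∈ s.sort (· ≤ ·) := by
    rw [nthElt, List.getD_eq_getElem?_getD, List.getElem?_eq_getElem hi']
    exact List.getElem_mem _
  exact (Finset.mem_sort _).1 this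

lemma exists_nthElt {s : Finset ℕ} {a : ℕ} (ha : a ∈ s) : ∃ i < s.card, nthElt s i = a := by
  have : a ∈ s.sort (· ≤ ·) := (Finset.mem_sort _).2 ha
  obtain ⟨⟨i, hi⟩, h⟩ := List.get_of_mem this
  refine ⟨i, by rwa [Finset.length_sort] at hi, ?_⟩
  rw [nthElt, List.getD_eq_getElem?_getD, List.getElem?_eq_getElem hi]
  simpa [List.get_eq_getElem] using h

lemma nthElt_of_sorted {l : List ℕ} (hl : l.Pairwise (· < ·)) {i : ℕ} (hi : i < l.length) :
    nthElt l.toFinset i = l.getD i 0 := by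
  rw [nthElt, (List.toFinset_sort _ hl.nodup).2 (hl.imp le_of_lt)]


section holesfacts
variable {n k : ℕ} {s : Finset ℕ} (hs : s ⊆ Finset.range n) (hsk : s.card = k) (hkn : k ≤ n)
include hs hsk hkn

lemma card_holes : (holes n s).card = n + 1 - k := by
  rw [holes, Finset.card_sdiff_of_subset (hs.trans (Finset.range_subset_range.2 (by omega))),
    Finset.card_range, hsk]

lemma hnth_mem {i : ℕ} (hi : i ≤ n - k) : hnth n s i ∈ holes n s := by
  apply nthElt_mem; rw [card_holes hs hsk hkn]; omega

lemma hnth_le {i : ℕ} (hi : i ≤ n - k) : hnth n s i ≤ n := by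
  have := hnth_mem hs hsk hkn hi
  rw [holes, Finset.mem_sdiff, Finset.mem_range] at this; omega

lemma hnth_lt_hnth {i j : ℕ} (hij : i < j) (hj : j ≤ n - k) : hnth n s i < hnth n s j := by
  apply nthElt_lt_nthElt hij; rw [card_holes hs hsk hkn]; omega

lemma hnth_last : hnth n s (n - k) = n := by
  have hn : (n : ℕ) ∈ holes n s := by
    rw [holes, Finset.mem_sdiff, Finset.mem_range]
    exact ⟨by omega, fun h => by have := hs h; rw [Finset.mem_range] at this; omega⟩
  obtain ⟨t, ht, hte⟩ := exists_nthElt hn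
  rw [card_holes hs hsk hkn] at ht
  rcases Nat.lt_or_ge t (n - k) with h | h
  · exfalso
    have h1 : nthElt (holes n s) t < nthElt (holes n s) (n - k) :=
      nthElt_lt_nthElt h (by rw [card_holes hs hsk hkn]; omega)
    have h2 : nthElt (holes n s) (n - k) ≤ n := hnth_le hs hsk hkn le_rfl
    omega
  · have ht' : t = n - k := by omega
    rw [hnth, ← ht', hte]

lemma eq_sdiff_holes : s = Finset.range (n + 1) \ holes n s := by
  rw [holes, Finset.sdiff_sdiff_self_left]
  exact (Finset.inter_eq_right.2 (hs.trans (Finset.range_subset_range.2 (by omega)))).symm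

end holesfacts


lemma invCount_eq_sum {k : ℕ} (σ : Equiv.Perm (Fin k)) :
    invCount σ = ∑ a : Fin k, ∑ b : Fin k, if a < b ∧ σ b < σ a then 1 else 0 := by
  rw [invCount, Finset.card_filter, Fintype.sum_prod_type]

def permConsFun {k : ℕ} (p : Fin (k + 1)) (τ : Equiv.Perm (Fin k)) (i : Fin (k + 1)) :
    Fin (k + 1) :=
  Fin.cases p (fun i' => p.succAbove (τ i')) i

lemma permConsFun_injective {k : ℕ} (p : Fin (k + 1)) (τ : Equiv.Perm (Fin k)) :
    Function.Injective (permConsFun p τ) := by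
  intro a b h
  induction a using Fin.cases with
  | zero =>
    induction b using Fin.cases with
    | zero => rfl
    | succ b' =>
      simp only [permConsFun, Fin.cases_zero, Fin.cases_succ] at h
      exact absurd h.symm (Fin.succAbove_ne p (τ b'))
  | succ a' =>
    induction b using Fin.cases with
    | zero =>
      simp only [permConsFun, Fin.cases_zero, Fin.cases_succ] at h
      exact absurd h (Fin.succAbove_ne p (τ a'))
    | succ b' =>
      simp only [permConsFun, Fin.cases_succ] at h
      have := τ.injective (Fin.succAbove_right_injective h)
      rw [this]

noncomputable def permCons {k : ℕ} (p : Fin (k + 1)) (τ : Equiv.Perm (Fin k)) :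
    Equiv.Perm (Fin (k + 1)) :=
  Equiv.ofBijective _ (Finite.injective_iff_bijective.1 (permConsFun_injective p τ))

@[simp] lemma permCons_zero {k : ℕ} (p : Fin (k + 1)) (τ : Equiv.Perm (Fin k)) :
    permCons p τ 0 = p := rfl

@[simp] lemma permCons_succ {k : ℕ} (p : Fin (k + 1)) (τ : Equiv.Perm (Fin k)) (i : Fin k) :
    permCons p τ i.succ = p.succAbove (τ i) := by
  show permConsFun p τ i.succ = _
  simp [permConsFun]

lemma card_filter_castSucc_lt {k : ℕ} (p : Fin (k + 1)) :
    (∑ m : Fin k, if (m.castSucc < p) then (1:ℕ) else 0) = p.val := by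
  have h1 : ∀ m : Fin k, (m.castSucc < p ↔ (m : ℕ) < (p : ℕ)) := by
    intro m; rw [Fin.lt_def]; simp
  simp_rw [h1]
  rw [Fin.sum_univ_eq_sum_range (fun m => if m < (p:ℕ) then (1:ℕ) else 0)]
  rw [← Finset.card_filter]
  have : (Finset.range k).filter (· < (p:ℕ)) = Finset.range (p:ℕ) := by
    ext m
    simp only [Finset.mem_filter, Finset.mem_range]
    omega
  rw [this, Finset.card_range]

lemma invCount_permCons {k : ℕ} (p : Fin (k + 1)) (τ : Equiv.Perm (Fin k)) :
    invCount (permCons p τ) = p.val + invCount τ := by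
  rw [invCount_eq_sum, Fin.sum_univ_succ]
  have h0 : (∑ b : Fin (k+1), if 0 < b ∧ permCons p τ b < permCons p τ 0 then (1:ℕ) else 0)
      = p.val := by
    rw [Fin.sum_univ_succ]
    simp only [lt_self_iff_false, false_and, if_false, zero_add]
    have : ∀ j : Fin k, ((0 : Fin (k+1)) < j.succ ∧ permCons p τ j.succ < permCons p τ 0
        ↔ (τ j).castSucc < p) := by
      intro j
      simp only [permCons_zero, permCons_succ]
      constructor
      · rintro ⟨-, h⟩; rwa [Fin.succAbove_lt_iff_castSucc_lt] at h
      · intro h; exact ⟨Fin.succ_pos j, (Fin.succAbove_lt_iff_castSucc_lt p (τ j)).2 h⟩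
    simp_rw [this]
    rw [← card_filter_castSucc_lt p]
    exact Equiv.sum_comp τ (fun m => if m.castSucc < p then (1:ℕ) else 0)
  rw [h0]
  congr 1
  rw [invCount_eq_sum]
  refine Finset.sum_congr rfl (fun i _ => ?_)
  rw [Fin.sum_univ_succ]
  have hz : (if i.succ < (0 : Fin (k+1)) ∧ permCons p τ 0 < permCons p τ i.succ
      then (1:ℕ) else 0) = 0 := by
    rw [if_neg]; rintro ⟨h, -⟩; simp at h
  rw [hz, zero_add]
  refine Finset.sum_congr rfl (fun j _ => ?_)
  congr 1
  simp only [permCons_succ, eq_iff_iff]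
  rw [Fin.succ_lt_succ_iff, Fin.succAbove_lt_succAbove_iff]

lemma permCons_bijective {k : ℕ} :
    Function.Bijective (fun pt : Fin (k + 1) × Equiv.Perm (Fin k) => permCons pt.1 pt.2) := by
  constructor
  · rintro ⟨p, τ⟩ ⟨p', τ'⟩ h
    simp only at h
    have hp : p = p' := by
      have := congrArg (fun e : Equiv.Perm (Fin (k+1)) => e 0) h
      simpa using this
    subst hp
    have hτ : τ = τ' := by
      apply Equiv.ext; intro i
      have := congrArg (fun e : Equiv.Perm (Fin (k+1)) => e i.succ) h
      simp only [permCons_succ] at this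
      exact Fin.succAbove_right_injective this
    rw [hτ]
  · intro σ
    have hne : ∀ i : Fin k, σ i.succ ≠ σ 0 := fun i h => by
      have := σ.injective h
      exact Fin.succ_ne_zero i this
    choose u hu using fun i => Fin.exists_succAbove_eq (hne i)
    have huinj : Function.Injective u := by
      intro a b h
      have : σ a.succ = σ b.succ := by rw [← hu a, ← hu b, h]
      have := σ.injective this
      exact Fin.succ_injective _ this
    refine ⟨⟨σ 0, Equiv.ofBijective u (Finite.injective_iff_bijective.1 huinj)⟩, ?_⟩
    apply Equiv.ext; intro i
    induction i using Fin.cases with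
    | zero => simp
    | succ i' => simp only [permCons_succ, Equiv.ofBijective_apply]; exact hu i'

lemma sum_perm_inv (k : ℕ) :
    ∑ σ : Equiv.Perm (Fin k), (Polynomial.X : Polynomial ℤ) ^ (2 * invCount σ) = qFact k := by
  induction k with
  | zero =>
    have h1 : ∀ σ : Equiv.Perm (Fin 0), invCount σ = 0 := fun σ =>
      Finset.card_eq_zero.2 (Finset.eq_empty_of_isEmpty _)
    simp only [h1, mul_zero, pow_zero, Finset.sum_const, nsmul_eq_mul, mul_one]
    rw [qFact, Finset.prod_range_zero, Finset.card_univ, Fintype.card_perm]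
    norm_num
  | succ k ih =>
    rw [← Fintype.sum_bijective _ permCons_bijective
      (fun pt => (Polynomial.X : Polynomial ℤ) ^ (2 * (pt.1.val + invCount pt.2))) _
      (fun pt => by rw [invCount_permCons])]
    rw [Fintype.sum_prod_type]
    have : ∀ (p : Fin (k+1)) (τ : Equiv.Perm (Fin k)),
        (Polynomial.X : Polynomial ℤ) ^ (2 * (p.val + invCount τ))
        = Polynomial.X ^ (2 * p.val) * Polynomial.X ^ (2 * invCount τ) := by
      intro p τ; rw [← pow_add, Nat.mul_add]
    simp_rw [this]
    rw [← Finset.sum_mul_sum, ih]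
    have hq : (∑ p : Fin (k+1), (Polynomial.X : Polynomial ℤ) ^ (2 * p.val)) = qInt (k+1) := by
      rw [qInt, Fin.sum_univ_eq_sum_range (fun m => (Polynomial.X : Polynomial ℤ) ^ (2 * m))]
    rw [hq, qFact, qFact, Finset.prod_range_succ, mul_comm]


lemma sort_eq_ofFn (s : Finset ℕ) :
    s.sort (· ≤ ·) = List.ofFn (fun t : Fin s.card => nthElt s t) := by
  apply List.ext_getElem (by simp [Finset.length_sort])
  intro i h1 h2
  simp only [List.getElem_ofFn, nthElt, List.getD_eq_getElem?_getD,
    List.getElem?_eq_getElem h1, Option.getD_some]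

section szum

variable (n k m : ℕ) (J M : ℕ → ℕ)

/-- The padded hole function determined by a choice `g`. -/
def Ffun (g : Fin m → ℕ) (t : ℕ) : ℕ :=
  if h : t < m then J t + g ⟨t, h⟩ else n + (t - m)

/-- The list of the holes of the candidate `z` determined by `g`. -/
def glist (g : Fin m → ℕ) : List ℕ := List.ofFn (fun t : Fin (m + 1) => Ffun n m J g t)

/-- The candidate `z` determined by `g`. -/
def zOf (g : Fin m → ℕ) : Finset ℕ := Finset.range (n + 1) \ (glist n m J g).toFinset

variable {n k m J M}

section good
variable (hkn : k ≤ n) (hm : m = n - k)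
  (hMJ : ∀ i, i + 1 < m → M i ≤ J (i + 1)) (hMn : ∀ i < m, M i ≤ n)
  (hlt : ∀ i < m, J i < M i)
variable {g : Fin m → ℕ} (hg : ∀ i : Fin m, g i < M i - J i)
include hMJ hMn hlt hg

lemma Ffun_strictMono : StrictMono (Ffun n m J g) := by
  apply strictMono_nat_of_lt_succ
  intro t
  rcases Nat.lt_or_ge t m with h | h
  · have h1 : Ffun n m J g t < M t := by
      have h5 := hg ⟨t, h⟩
      simp only [Fin.val_mk] at h5
      have := hlt t h
      simp only [Ffun, dif_pos h]
      omega
    rcases Nat.lt_or_ge (t + 1) m with h2 | h2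
    · have h3 : M t ≤ J (t + 1) := hMJ t h2
      have : J (t + 1) ≤ Ffun n m J g (t + 1) := by simp only [Ffun, dif_pos h2]; omega
      omega
    · have h4 : Ffun n m J g (t + 1) = n + (t + 1 - m) := by
        simp only [Ffun]
        rw [dif_neg (show ¬ t + 1 < m by omega)]
      have := hMn t h
      rw [h4]
      omega
  · simp only [Ffun, dif_neg (by omega : ¬ t < m), dif_neg (by omega : ¬ t + 1 < m)]
    omega

lemma glist_sorted : (glist n m J g).Pairwise (· < ·) := by
  rw [glist, List.pairwise_ofFn]
  intro a b hab
  exact Ffun_strictMono hMJ hMn hlt hg (by exact_mod_cast hab)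

end good

section good2
set_option linter.unusedSectionVars false
variable (hkn : k ≤ n) (hm : m = n - k)
  (hMJ : ∀ i, i + 1 < m → M i ≤ J (i + 1)) (hMn : ∀ i < m, M i ≤ n)
  (hlt : ∀ i < m, J i < M i)
variable {g : Fin m → ℕ} (hg : ∀ i : Fin m, g i < M i - J i)
include hkn hm hMJ hMn hlt hg

lemma Ffun_lt_M {t : ℕ} (ht : t < m) : J t ≤ Ffun n m J g t ∧ Ffun n m J g t < M t := by
  have h5 := hg ⟨t, ht⟩
  simp only [Fin.val_mk] at h5
  have := hlt t ht
  simp only [Ffun, dif_pos ht]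
  omega

lemma Ffun_last : Ffun n m J g m = n := by
  simp only [Ffun]
  rw [dif_neg (by omega)]
  omega

lemma glist_nodup : (glist n m J g).Nodup :=
  (glist_sorted hMJ hMn hlt hg).nodup

lemma glist_getD {t : ℕ} (ht : t < m + 1) : (glist n m J g).getD t 0 = Ffun n m J g t := by
  have hlen : (glist n m J g).length = m + 1 := by simp [glist]
  rw [List.getD_eq_getElem?_getD, List.getElem?_eq_getElem (by omega)]
  simp only [glist, List.getElem_ofFn, Option.getD_some]

lemma glist_toFinset_subset : (glist n m J g).toFinset ⊆ Finset.range (n + 1) := by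
  intro a ha
  rw [List.mem_toFinset, glist, List.mem_ofFn] at ha
  obtain ⟨t, rfl⟩ := ha
  rw [Finset.mem_range]
  show Ffun n m J g t < n + 1
  rcases Nat.lt_or_ge (t : ℕ) m with h | h
  · have h1 := (Ffun_lt_M hkn hm hMJ hMn hlt hg h).2
    have := hMn t h
    omega
  · have ht : (t : ℕ) = m := by omega
    rw [ht, Ffun_last hkn hm hMJ hMn hlt hg]
    omega

lemma mem_glist_toFinset : n ∈ (glist n m J g).toFinset := by
  rw [List.mem_toFinset, glist, List.mem_ofFn]
  exact ⟨⟨m, by omega⟩, Ffun_last hkn hm hMJ hMn hlt hg⟩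

lemma glist_card : (glist n m J g).toFinset.card = m + 1 := by
  rw [List.card_toFinset, (glist_nodup hkn hm hMJ hMn hlt hg).dedup]
  simp [glist]

lemma zOf_subset : zOf n m J g ⊆ Finset.range n := by
  intro a ha
  rw [zOf, Finset.mem_sdiff, Finset.mem_range] at ha
  have hne : a ≠ n := fun h => ha.2 (h ▸ mem_glist_toFinset hkn hm hMJ hMn hlt hg)
  rw [Finset.mem_range]
  omega

lemma zOf_card : (zOf n m J g).card = k := by
  rw [zOf, Finset.card_sdiff_of_subset (glist_toFinset_subset hkn hm hMJ hMn hlt hg),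
    glist_card hkn hm hMJ hMn hlt hg, Finset.card_range]
  omega

lemma holes_zOf : holes n (zOf n m J g) = (glist n m J g).toFinset := by
  rw [holes, zOf, Finset.sdiff_sdiff_self_left]
  exact Finset.inter_eq_right.2 (glist_toFinset_subset hkn hm hMJ hMn hlt hg)

lemma hnth_zOf {t : ℕ} (ht : t < m + 1) : hnth n (zOf n m J g) t = Ffun n m J g t := by
  rw [hnth, holes_zOf hkn hm hMJ hMn hlt hg,
    nthElt_of_sorted (glist_sorted hMJ hMn hlt hg) (by simp [glist]; omega),
    glist_getD hkn hm hMJ hMn hlt hg ht]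

end good2
end szum

lemma getD_eq_getElem' (l : List ℕ) {t : ℕ} (h : t < l.length) : l.getD t 0 = l[t] := by
  rw [List.getD_eq_getElem?_getD, List.getElem?_eq_getElem h, Option.getD_some]

lemma sum_z (n k m : ℕ) (J M : ℕ → ℕ) (hkn : k ≤ n) (hm : m = n - k)
    (hMJ : ∀ i, i + 1 < m → M i ≤ J (i + 1)) (hMn : ∀ i < m, M i ≤ n) :
    ∑ z ∈ (Finset.range n).powerset.filter
        (fun z => z.card = k ∧ ∀ i < m, J i ≤ hnth n z i ∧ hnth n z i < M i),
      (Polynomial.X : Polynomial ℤ) ^ (2 * ∑ i ∈ Finset.range m, (hnth n z i - J i))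
      = ∏ i ∈ Finset.range m, qInt (M i - J i) := by
  by_cases hall : ∀ i < m, J i < M i
  · -- all intervals nonempty: bijection with tuples
    have hR : ∏ i ∈ Finset.range m, qInt (M i - J i)
        = ∑ g ∈ Fintype.piFinset (fun i : Fin m => Finset.range (M ↑i - J ↑i)),
            (Polynomial.X : Polynomial ℤ) ^ (2 * ∑ i : Fin m, g i) := by
      rw [← Fin.prod_univ_eq_prod_range (fun i => qInt (M i - J i)) m]
      simp_rw [qInt]
      rw [Finset.prod_univ_sum]
      refine Finset.sum_congr rfl (fun g hg => ?_)
      rw [Finset.prod_pow_eq_pow_sum]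
      congr 1
      rw [Finset.mul_sum]
    rw [hR]
    refine Finset.sum_nbij' (fun z => fun i : Fin m => hnth n z i - J i)
      (fun g => zOf n m J g) ?_ ?_ ?_ ?_ ?_
    · -- hi
      intro z hz
      rw [Finset.mem_filter] at hz
      obtain ⟨hzp, hzk, hzc⟩ := hz
      rw [Fintype.mem_piFinset]
      intro i
      have := hzc i i.isLt
      rw [Finset.mem_range]
      show hnth n z ↑i - J ↑i < M ↑i - J ↑i
      omega
    · -- hj
      intro g hgmem
      rw [Fintype.mem_piFinset] at hgmem
      have hg : ∀ i : Fin m, g i < M i - J i := fun i => by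
        have := hgmem i; rwa [Finset.mem_range] at this
      rw [Finset.mem_filter, Finset.mem_powerset]
      refine ⟨zOf_subset hkn hm hMJ hMn hall hg, zOf_card hkn hm hMJ hMn hall hg, ?_⟩
      intro i hi
      rw [hnth_zOf hkn hm hMJ hMn hall hg (by omega)]
      exact Ffun_lt_M hkn hm hMJ hMn hall hg hi
    · -- left inverse
      intro z hz
      rw [Finset.mem_filter, Finset.mem_powerset] at hz
      obtain ⟨hzp, hzk, hzc⟩ := hz
      have hφ : ∀ i : Fin m, (hnth n z i - J i) < M i - J i := fun i => by
        have := hzc i i.isLt; omega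
      have hglist : glist n m J (fun i : Fin m => hnth n z ↑i - J ↑i)
          = (holes n z).sort (· ≤ ·) := by
        apply List.ext_getElem
        · rw [Finset.length_sort, card_holes hzp hzk hkn]
          simp [glist]
          omega
        · intro t h1 h2
          have hlen : (glist n m J (fun i : Fin m => hnth n z ↑i - J ↑i)).length = m + 1 := by
            simp [glist]
          rw [← getD_eq_getElem' _ h1, ← getD_eq_getElem' _ h2]
          rw [glist_getD hkn hm hMJ hMn hall hφ (by omega)]
          have hsort : ((holes n z).sort (· ≤ ·)).getD t 0 = hnth n z t := rfl
          rw [hsort]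
          rcases Nat.lt_or_ge t m with ht | ht
          · have h3 := (hzc t ht).1
            simp only [Ffun, dif_pos ht]
            omega
          · have ht' : t = m := by omega
            subst ht'
            rw [Ffun_last hkn hm hMJ hMn hall hφ, hm, hnth_last hzp hzk hkn]
      show zOf n m J (fun i : Fin m => hnth n z ↑i - J ↑i) = z
      rw [zOf, hglist, Finset.sort_toFinset, ← eq_sdiff_holes hzp hzk hkn]
    · -- right inverse
      intro g hgmem
      rw [Fintype.mem_piFinset] at hgmem
      have hg : ∀ i : Fin m, g i < M i - J i := fun i => by
        have := hgmem i; rwa [Finset.mem_range] at this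
      funext i
      show hnth n (zOf n m J g) ↑i - J ↑i = g i
      rw [hnth_zOf hkn hm hMJ hMn hall hg (by omega)]
      simp only [Ffun, dif_pos i.isLt, Fin.eta]
      omega
    · -- values agree
      intro z hz
      congr 1
      rw [Fin.sum_univ_eq_sum_range (fun i => hnth n z i - J i) m]
  · -- some interval empty: both sides are zero
    push_neg at hall
    obtain ⟨i0, hi0, hle⟩ := hall
    have hA : (Finset.range n).powerset.filter
        (fun z => z.card = k ∧ ∀ i < m, J i ≤ hnth n z i ∧ hnth n z i < M i) = ∅ := by
      rw [Finset.filter_eq_empty_iff]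
      rintro z hz ⟨hzk, hzc⟩
      have := hzc i0 hi0
      omega
    rw [hA, Finset.sum_empty]
    symm
    apply Finset.prod_eq_zero (Finset.mem_range.2 hi0)
    rw [show M i0 - J i0 = 0 by omega, qInt, Finset.sum_range_zero]


/-- Graded count of enhanced oriented fork diagrams:
`Σ_z Σ_{σ ∈ S_k} q^{d + 2 inv(σ) + 2 Σ_i (h_i^z − j_i)} = q^d (k)!_{q²} Π_i (l_i)_{q²}`. -/
theorem graded_fork_count (n k : ℕ) (hkn : k ≤ n) (x y : Finset ℕ)
    (hx : x ⊆ Finset.range n) (hy : y ⊆ Finset.range n)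
    (hxk : x.card = k) (hyk : y.card = k) (hfar : ¬ TooFar k x y)
    (d : ℕ) (hd : d = ∑ i ∈ Finset.range k, ((nthElt x i : ℤ) - (nthElt y i : ℤ)).natAbs) :
    ∑ z ∈ (Finset.range n).powerset.filter (fun z => z.card = k ∧ OrientedZ n k x y z),
      ∑ σ : Equiv.Perm (Fin k),
        (Polynomial.X : Polynomial ℤ) ^
          (d + 2 * invCount σ +
            2 * ∑ i ∈ Finset.range (n - k),
                  (hnth n z i - max (hnth n x i) (hnth n y i)))
      = Polynomial.X ^ d * qFact k *
          ∏ i ∈ Finset.range (n - k),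
            qInt (min (hnth n x (i + 1)) (hnth n y (i + 1))
              - max (hnth n x i) (hnth n y i)) := by
  classical
  have e : ∀ S : ℕ, (∑ σ : Equiv.Perm (Fin k),
      (Polynomial.X : Polynomial ℤ) ^ (d + 2 * invCount σ + S))
      = Polynomial.X ^ d * qFact k * Polynomial.X ^ S := by
    intro S
    rw [← sum_perm_inv k, Finset.mul_sum, Finset.sum_mul]
    refine Finset.sum_congr rfl (fun σ _ => ?_)
    rw [pow_add, pow_add]
  have h1 : ∀ z : Finset ℕ,
      (∑ σ : Equiv.Perm (Fin k), (Polynomial.X : Polynomial ℤ) ^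
        (d + 2 * invCount σ + 2 * ∑ i ∈ Finset.range (n - k),
          (hnth n z i - max (hnth n x i) (hnth n y i))))
      = Polynomial.X ^ d * qFact k * Polynomial.X ^
          (2 * ∑ i ∈ Finset.range (n - k),
            (hnth n z i - max (hnth n x i) (hnth n y i))) := fun z => e _
  simp_rw [h1]
  rw [← Finset.mul_sum]
  congr 1
  have hfilter : (Finset.range n).powerset.filter
        (fun z => z.card = k ∧ OrientedZ n k x y z)
      = (Finset.range n).powerset.filter
        (fun z => z.card = k ∧ ∀ i < n - k,
          (fun i => max (hnth n x i) (hnth n y i)) i ≤ hnth n z i ∧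
            hnth n z i < (fun i => min (hnth n x (i + 1)) (hnth n y (i + 1))) i) :=
    Finset.filter_congr (fun z _ => Iff.rfl)
  rw [hfilter]
  exact sum_z n k (n - k) (fun i => max (hnth n x i) (hnth n y i))
    (fun i => min (hnth n x (i + 1)) (hnth n y (i + 1))) hkn rfl
    (fun i hi => le_trans (min_le_left _ _) (le_max_left _ _))
    (fun i hi => le_trans (min_le_left _ _) (hnth_le hx hxk hkn (by omega)))
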